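/- arXiv:1001.1748 — 2 statements merged into one kernel-verified Lean document; each statement's English description precedes it below -/
import Mathlib

section
/- If d ∈ ℓ∞(ℤ) is limit-periodic, then there exist positive integers n₁, n₂, … with n_j | n_{j+1} and potentials p_j ∈ ℓ∞(ℤ) with p_j periodic of period n_j, such that d(k) = Σ_{j=1}^∞ p_j(k) for every k ∈ ℤ, the series converging uniformly in k. -/
open BoundedContinuousFunction Filter

noncomputable def shiftk (k : ℤ) (d : ℤ →ᵇ ℝ) : ℤ →ᵇ ℝ :=
  d.compContinuous ⟨fun n => n + k, continuous_of_discreteTopology⟩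

noncomputable def orb (d : ℤ →ᵇ ℝ) : Set (ℤ →ᵇ ℝ) := Set.range (fun k : ℤ => shiftk k d)

noncomputable def hull (d : ℤ →ᵇ ℝ) : Set (ℤ →ᵇ ℝ) := closure (orb d)

def IsPeriodicPotential (p : ℤ →ᵇ ℝ) : Prop := (orb p).Finite

def IsLimitPeriodic (d : ℤ →ᵇ ℝ) : Prop :=
  d ∈ closure {p : ℤ →ᵇ ℝ | IsPeriodicPotential p}

noncomputable def shiftMem (d : ℤ →ᵇ ℝ) (k : ℤ) : ↥(hull d) :=
  ⟨shiftk k d, subset_closure ⟨k, rfl⟩⟩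

noncomputable def hullId (d : ℤ →ᵇ ℝ) : ↥(hull d) :=
  ⟨d, subset_closure ⟨0, by ext n; simp [shiftk]⟩⟩

noncomputable def freqModule (d : ℤ →ᵇ ℝ) : AddSubgroup ℝ :=
  AddSubgroup.closure {α : ℝ | ∃ L : ℂ, L ≠ 0 ∧
    Filter.Tendsto (fun n : ℕ => (1 / (2 * (n : ℂ))) *
      ∑ k ∈ Finset.Icc (-(n : ℤ)) (n : ℤ), (d k : ℂ) * Complex.exp (-(Complex.I) * k * α))
      Filter.atTop (nhds L)}

def IsFreqIntegerSet (d : ℤ →ᵇ ℝ) (S : Set ℕ) : Prop :=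
  (∀ n ∈ S, 0 < n) ∧
  freqModule d = AddSubgroup.closure ((fun n : ℕ => 2 * Real.pi / (n : ℝ)) '' S)

def CanonicalMul (d : ℤ →ᵇ ℝ) (m : ↥(hull d) → ↥(hull d) → ↥(hull d)) : Prop :=
  Continuous (fun p : ↥(hull d) × ↥(hull d) => m p.1 p.2) ∧
  ∀ k l : ℤ, m (shiftMem d k) (shiftMem d l) = shiftMem d (k + l)

def HullGroupIso (d e : ℤ →ᵇ ℝ) : Prop :=
  ∃ md me, CanonicalMul d md ∧ CanonicalMul e me ∧
    ∃ h : ↥(hull d) ≃ₜ ↥(hull e), ∀ x y, h (md x y) = me (h x) (h y)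

lemma shiftk_apply' (d : ℤ →ᵇ ℝ) (k n : ℤ) : shiftk k d n = d (n + k) := rfl

lemma period_dvd' (p : ℤ →ᵇ ℝ) (m M : ℕ) (hdvd : m ∣ M)
    (h : ∀ k : ℤ, p (k + m) = p k) : ∀ k : ℤ, p (k + M) = p k := by
  obtain ⟨t, rfl⟩ := hdvd
  have hP : Function.Periodic (fun k : ℤ => p k) (m : ℤ) := h
  have := hP.int_mul t
  intro k
  have h2 := this k
  simpa [mul_comm (t : ℤ) (m : ℤ)] using h2

lemma isPeriodic_of_period' (p : ℤ →ᵇ ℝ) (m : ℕ) (hm : 0 < m)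
    (h : ∀ k : ℤ, p (k + m) = p k) : IsPeriodicPotential p := by
  have hm' : (0 : ℤ) < m := by exact_mod_cast hm
  have hP : Function.Periodic (fun k : ℤ => p k) (m : ℤ) := h
  have key : ∀ k : ℤ, shiftk k p = shiftk (k % m) p := by
    intro k
    ext n
    simp only [shiftk_apply']
    have hk : (n + k) = (n + k % m) + (k / m) * m := by
      have := Int.mul_ediv_add_emod k m
      linarith
    rw [hk]
    exact hP.int_mul (k / m) (n + k % m)
  apply Set.Finite.subset (((Set.finite_Icc (0 : ℤ) m).image (fun r => shiftk r p)))
  rintro x ⟨k, rfl⟩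
  exact ⟨k % m, ⟨Int.emod_nonneg k (by omega), (Int.emod_lt_of_pos k hm').le⟩, (key k).symm⟩

lemma exists_period' (p : ℤ →ᵇ ℝ) (h : IsPeriodicPotential p) :
    ∃ m : ℕ, 0 < m ∧ ∀ k : ℤ, p (k + m) = p k := by
  have hni : ¬ Function.Injective (fun k : ℤ => shiftk k p) := by
    intro hinj
    exact Set.infinite_range_of_injective hinj h
  obtain ⟨a, b, hab, hne⟩ := Function.not_injective_iff.mp hni
  have hper : ∀ k : ℤ, p (k + (a - b)) = p k := by
    intro k
    have h1 := DFunLike.congr_fun hab (k - b)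
    simp only [shiftk_apply'] at h1
    have e1 : k - b + a = k + (a - b) := by ring
    have e2 : k - b + b = k := by ring
    rw [e1, e2] at h1
    exact h1
  have hP : Function.Periodic (fun k : ℤ => p k) (a - b) := hper
  refine ⟨(a - b).natAbs, Int.natAbs_pos.mpr (sub_ne_zero.mpr hne), ?_⟩
  intro k
  rcases Int.natAbs_eq (a - b) with he | he
  · rw [← he]; exact hper k
  · have hcast : (((a - b).natAbs : ℤ)) = -(a - b) := by omega
    rw [hcast]; exact hP.neg k

/-- A limit-periodic `d` is a uniformly convergent sum `d = Σ_j p_j` of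
periodic potentials `p_j` with periods `n_j` satisfying `n_j ∣ n_{j+1}`. -/
theorem statement_1 (d : ℤ →ᵇ ℝ) (hd : IsLimitPeriodic d) :
    ∃ n : ℕ → ℕ, (∀ j, 0 < n j) ∧ (∀ j, n j ∣ n (j + 1)) ∧
      ∃ p : ℕ → (ℤ →ᵇ ℝ),
        (∀ j, IsPeriodicPotential (p j)) ∧
        (∀ j, ∀ k : ℤ, p j (k + (n j : ℤ)) = p j k) ∧
        Filter.Tendsto (fun J : ℕ => ∑ j ∈ Finset.range J, p j) Filter.atTop (nhds d) := by
  have hq : ∀ j : ℕ, ∃ q : ℤ →ᵇ ℝ, IsPeriodicPotential q ∧ dist d q < (1/2 : ℝ)^j := by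
    intro j
    obtain ⟨q, hq1, hq2⟩ := Metric.mem_closure_iff.mp hd ((1/2 : ℝ)^j) (by positivity)
    exact ⟨q, hq1, hq2⟩
  choose q hqper hqdist using hq
  choose m hmpos hmper using fun j => exists_period' (q j) (hqper j)
  set n : ℕ → ℕ := fun j => ∏ i ∈ Finset.range (j+1), m i with hn
  have hnpos : ∀ j, 0 < n j := fun j => Finset.prod_pos (fun i _ => hmpos i)
  have hndvd : ∀ j, n j ∣ n (j+1) := fun j =>
    Finset.prod_dvd_prod_of_subset _ _ _ (Finset.range_subset_range.mpr (by omega))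
  have hmn : ∀ j, m j ∣ n j := fun j =>
    Finset.dvd_prod_of_mem _ (Finset.self_mem_range_succ j)
  have hqn : ∀ j, ∀ k : ℤ, q j (k + n j) = q j k :=
    fun j => period_dvd' _ _ _ (hmn j) (hmper j)
  set p : ℕ → (ℤ →ᵇ ℝ) := fun j => if j = 0 then q 0 else q j - q (j-1) with hp
  have hpper : ∀ j, ∀ k : ℤ, p j (k + n j) = p j k := by
    intro j k
    match j with
    | 0 => simpa [hp] using hqn 0 k
    | j+1 =>
      have h1 := hqn (j+1) k
      have h2 := period_dvd' (q j) (n j) (n (j+1)) (hndvd j) (hqn j) k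
      simp only [hp, if_neg (Nat.succ_ne_zero j), Nat.add_sub_cancel,
        BoundedContinuousFunction.sub_apply]
      rw [h1, h2]
  refine ⟨n, hnpos, hndvd, p, fun j => isPeriodic_of_period' (p j) (n j) (hnpos j) (hpper j),
    hpper, ?_⟩
  have hsum : ∀ J : ℕ, ∑ j ∈ Finset.range (J+1), p j = q J := by
    intro J
    induction J with
    | zero => simp [hp]
    | succ J ih =>
      rw [Finset.sum_range_succ, ih]
      simp [hp, if_neg (Nat.succ_ne_zero J)]
  have hqd : Tendsto q atTop (nhds d) := by
    rw [tendsto_iff_dist_tendsto_zero]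
    apply squeeze_zero (fun j => dist_nonneg) (fun j => (dist_comm (q j) d ▸ (hqdist j).le))
    exact tendsto_pow_atTop_nhds_zero_of_lt_one (by norm_num) (by norm_num)
  rw [← Filter.tendsto_add_atTop_iff_nat 1]
  have : (fun J : ℕ => ∑ j ∈ Finset.range (J+1), p j) = q := funext hsum
  rw [this]
  exact hqd
end

section
/- Let Ω be a Cantor group, T a minimal translation of Ω with identity element e, and f ∈ C(Ω,ℝ); set F(ω) = (f(Tⁿ(ω)))_{n∈ℤ}. Then the map φ : Ω → hull(F(e)), φ(ω) = F(ω), is a continuous surjective group homomorphism onto hull(F(e)) (equipped with its canonical group structure with identity F(e)); consequently hull(F(e)) is isomorphic as a topological group to the quotient Ω/ker(φ). -/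
open BoundedContinuousFunction Filter

variable {Ω : Type*} [TopologicalSpace Ω] [CommGroup Ω] [IsTopologicalGroup Ω] [CompactSpace Ω]
  [TotallyDisconnectedSpace Ω]

/-- The translation `T(ω) = ω·a` is minimal: every `T`-orbit is dense. -/
def IsMinimalTranslation (a : Ω) : Prop :=
  ∀ ω : Ω, Dense (Set.range fun n : ℤ => ω * a ^ n)

/-- `Ω` has no isolated points. -/
def NoIsolatedPoints (Ω : Type*) [TopologicalSpace Ω] : Prop :=
  ∀ ω : Ω, Filter.NeBot (nhdsWithin ω {ω}ᶜ)

/-- `F(ω) = (f(Tⁿ(ω)))_{n ∈ ℤ}` where `T` is the translation by `a`. -/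
noncomputable def sample (f : C(Ω, ℝ)) (a ω : Ω) : ℤ →ᵇ ℝ :=
  (BoundedContinuousFunction.mkOfCompact f).compContinuous
    ⟨fun n : ℤ => ω * a ^ n, continuous_of_discreteTopology⟩

set_option linter.unusedSectionVars false
section AuxStatement10

variable (f : C(Ω, ℝ)) (a : Ω)

lemma sample_apply' (ω : Ω) (n : ℤ) : sample f a ω n = f (ω * a ^ n) := rfl

lemma sample_shiftk (ω : Ω) (k : ℤ) :
    shiftk k (sample f a ω) = sample f a (ω * a ^ k) := by
  ext n
  simp only [shiftk, sample, BoundedContinuousFunction.compContinuous_apply,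
    ContinuousMap.coe_mk, BoundedContinuousFunction.mkOfCompact_apply]
  rw [mul_assoc, ← zpow_add, add_comm]

lemma exists_nhds_dist_le {ε : ℝ} (hε : 0 < ε) :
    ∃ V ∈ nhds (1 : Ω), ∀ x y : Ω, y / x ∈ V → dist (f x) (f y) ≤ ε := by
  letI : UniformSpace Ω := IsTopologicalGroup.rightUniformSpace Ω
  have huc : UniformContinuous f := CompactSpace.uniformContinuous_of_continuous f.continuous
  have h : {p : Ω × Ω | dist (f p.1) (f p.2) < ε} ∈ uniformity Ω :=
    huc (Metric.dist_mem_uniformity hε)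
  rw [uniformity_eq_comap_nhds_one' Ω, Filter.mem_comap] at h
  obtain ⟨V, hV, hVsub⟩ := h
  exact ⟨V, hV, fun x y hxy => le_of_lt (hVsub (show ((x,y) : Ω × Ω) ∈ _ ⁻¹' V from by simpa [div_eq_mul_inv] using hxy))⟩

lemma sample_continuous : Continuous (sample f a) := by
  rw [continuous_iff_continuousAt]
  intro ω₀
  rw [ContinuousAt, Metric.tendsto_nhds]
  intro ε hε
  obtain ⟨V, hV, hV2⟩ := exists_nhds_dist_le f (half_pos hε) (Ω := Ω)
  have hmem : {ω : Ω | ω / ω₀ ∈ V} ∈ nhds ω₀ := by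
    have hc : Continuous fun ω : Ω => ω / ω₀ := continuous_id.div' continuous_const
    have h1 : V ∈ nhds ((fun ω : Ω => ω / ω₀) ω₀) := by
      rw [show (fun ω : Ω => ω / ω₀) ω₀ = 1 from div_self' ω₀]; exact hV
    exact hc.continuousAt.preimage_mem_nhds h1
  filter_upwards [hmem] with ω hω
  have hle : dist (sample f a ω) (sample f a ω₀) ≤ ε / 2 := by
    rw [BoundedContinuousFunction.dist_le (le_of_lt (half_pos hε))]
    intro n
    have : (ω * a ^ n) / (ω₀ * a ^ n) = ω / ω₀ := mul_div_mul_right_eq_div ω ω₀ (a ^ n)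
    have := hV2 (ω₀ * a ^ n) (ω * a ^ n) (by rw [this]; exact hω)
    simpa [sample_apply', dist_comm] using this
  linarith

variable (hmin : IsMinimalTranslation a)
include hmin

lemma sample_mem_hull (ω : Ω) : sample f a ω ∈ hull (sample f a 1) := by
  have hω : ω ∈ closure (Set.range fun n : ℤ => (1 : Ω) * a ^ n) :=
    (hmin 1).closure_eq ▸ Set.mem_univ ω
  have h2 : sample f a ω ∈
      closure (sample f a '' Set.range fun n : ℤ => (1 : Ω) * a ^ n) :=
    mem_closure_image (sample_continuous f a).continuousAt hω
  refine closure_mono ?_ h2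
  rintro _ ⟨_, ⟨k, rfl⟩, rfl⟩
  exact ⟨k, show shiftk k (sample f a 1) = _ from sample_shiftk f a 1 k⟩

lemma hull_subset_range : hull (sample f a 1) ⊆ Set.range (sample f a) := by
  have hcl : IsClosed (Set.range (sample f a)) :=
    (isCompact_range (sample_continuous f a)).isClosed
  refine closure_minimal ?_ hcl
  rintro _ ⟨k, rfl⟩
  exact ⟨1 * a ^ k, (sample_shiftk f a 1 k).symm⟩

/-- Key homomorphism-type lemma: if `φ ω = φ ω'` then `φ (ω*g) = φ (ω'*g)` for all `g`. -/
lemma sample_mul_congr {ω ω' : Ω} (h : sample f a ω = sample f a ω') (g : Ω) :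
    sample f a (ω * g) = sample f a (ω' * g) := by
  have hd : Dense (Set.range fun n : ℤ => (1 : Ω) * a ^ n) := hmin 1
  have heq : (fun g : Ω => sample f a (ω * g)) = fun g : Ω => sample f a (ω' * g) := by
    refine Continuous.ext_on hd
      ((sample_continuous f a).comp (continuous_const.mul continuous_id))
      ((sample_continuous f a).comp (continuous_const.mul continuous_id)) ?_
    rintro _ ⟨k, rfl⟩
    simp only [one_mul]
    rw [← sample_shiftk, ← sample_shiftk, h]
  exact congrFun heq g

end AuxStatement10

/-- With `e = 1` the identity of the Cantor group `Ω`, the map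
`φ : Ω → hull (F(e))`, `φ(ω) = F(ω)`, is a continuous surjective group homomorphism onto
`hull (F(e))` with its canonical group structure (identity `F(e)`); consequently
`hull (F(e)) ≅ Ω / ker φ` as topological groups. -/
theorem statement_10 {Ω : Type*} [TopologicalSpace Ω] [CommGroup Ω] [IsTopologicalGroup Ω]
    [CompactSpace Ω] [TotallyDisconnectedSpace Ω] (hni : NoIsolatedPoints Ω)
    (a : Ω) (hmin : IsMinimalTranslation a) (f : C(Ω, ℝ)) :
    ∃ hmem : ∀ ω : Ω, sample f a ω ∈ hull (sample f a 1),
      ∃ m, CanonicalMul (sample f a 1) m ∧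
        Continuous (fun ω : Ω => (⟨sample f a ω, hmem ω⟩ : ↥(hull (sample f a 1)))) ∧
        Function.Surjective
          (fun ω : Ω => (⟨sample f a ω, hmem ω⟩ : ↥(hull (sample f a 1)))) ∧
        (∀ ω₁ ω₂ : Ω,
          m ⟨sample f a ω₁, hmem ω₁⟩ ⟨sample f a ω₂, hmem ω₂⟩
            = ⟨sample f a (ω₁ * ω₂), hmem (ω₁ * ω₂)⟩) ∧
        -- the canonical identity of `hull (F(e))` is `F(e) = F(1)`
        m (hullId (sample f a 1)) (hullId (sample f a 1)) = hullId (sample f a 1) ∧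
        -- consequently `hull (F(e)) ≅ Ω / ker φ`
        ∃ N : Subgroup Ω, ((N : Set Ω) = {ω : Ω | sample f a ω = sample f a 1}) ∧
          ∃ e : (Ω ⧸ N) ≃ₜ ↥(hull (sample f a 1)),
            ∀ x y : Ω ⧸ N, e (x * y) = m (e x) (e y) := by
  classical
  have hmem : ∀ ω : Ω, sample f a ω ∈ hull (sample f a 1) := sample_mem_hull f a hmin
  have L : ∀ {ω ω' : Ω}, sample f a ω = sample f a ω' → ∀ g : Ω,
      sample f a (ω * g) = sample f a (ω' * g) := fun h g => sample_mul_congr f a hmin h g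
  -- the kernel subgroup
  let N : Subgroup Ω :=
    { carrier := {ω : Ω | sample f a ω = sample f a 1}
      one_mem' := rfl
      mul_mem' := by
        intro x y hx hy
        have h1 : sample f a (x * y) = sample f a (1 * y) := L hx y
        rw [one_mul] at h1
        exact h1.trans hy
      inv_mem' := by
        intro x hx
        have h1 : sample f a (x * x⁻¹) = sample f a (1 * x⁻¹) := L hx x⁻¹
        rw [mul_inv_cancel, one_mul] at h1
        exact h1.symm }
  -- the map to the hull
  let F' : Ω → ↥(hull (sample f a 1)) := fun ω => ⟨sample f a ω, hmem ω⟩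
  have hresp : ∀ x y : Ω, (QuotientGroup.leftRel N) x y → F' x = F' y := by
    intro x y hxy
    rw [QuotientGroup.leftRel_apply] at hxy
    have h1 : sample f a ((x⁻¹ * y) * x) = sample f a (1 * x) := L hxy x
    rw [one_mul, mul_comm, mul_inv_cancel_left] at h1
    exact Subtype.ext h1.symm
  let ψ : Ω ⧸ N → ↥(hull (sample f a 1)) := fun q => Quotient.liftOn' q F' hresp
  have hψmk : ∀ ω : Ω, ψ (QuotientGroup.mk ω) = F' ω := fun ω => rfl
  have hψcont : Continuous ψ := by
    rw [(QuotientGroup.isQuotientMap_mk N).continuous_iff]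
    exact (sample_continuous f a).subtype_mk _
  have hinj : Function.Injective ψ := by
    intro q1 q2
    refine Quotient.inductionOn₂' q1 q2 ?_
    intro x y h
    have hxy : sample f a x = sample f a y := congrArg Subtype.val h
    refine Quotient.sound' ?_
    rw [QuotientGroup.leftRel_apply]
    show sample f a (x⁻¹ * y) = sample f a 1
    have h1 : sample f a (y * x⁻¹) = sample f a (x * x⁻¹) := L hxy.symm x⁻¹
    rw [mul_inv_cancel] at h1
    rw [mul_comm]
    exact h1
  have hsurj : Function.Surjective ψ := by
    intro x
    obtain ⟨ω, hω⟩ := hull_subset_range f a hmin x.2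
    exact ⟨QuotientGroup.mk ω, Subtype.ext hω⟩
  let E : (Ω ⧸ N) ≃ₜ ↥(hull (sample f a 1)) :=
    Continuous.homeoOfEquivCompactToT2 (f := Equiv.ofBijective ψ ⟨hinj, hsurj⟩) hψcont
  have hEmk : ∀ ω : Ω, E (QuotientGroup.mk ω) = ⟨sample f a ω, hmem ω⟩ := fun ω => rfl
  have hEsymm : ∀ ω : Ω,
      E.symm ⟨sample f a ω, hmem ω⟩ = QuotientGroup.mk ω := by
    intro ω
    rw [← hEmk ω, Homeomorph.symm_apply_apply]
  let m : ↥(hull (sample f a 1)) → ↥(hull (sample f a 1)) → ↥(hull (sample f a 1)) :=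
    fun x y => E (E.symm x * E.symm y)
  have hHom : ∀ ω₁ ω₂ : Ω,
      m ⟨sample f a ω₁, hmem ω₁⟩ ⟨sample f a ω₂, hmem ω₂⟩
        = ⟨sample f a (ω₁ * ω₂), hmem (ω₁ * ω₂)⟩ := by
    intro ω₁ ω₂
    show E (E.symm _ * E.symm _) = _
    rw [hEsymm ω₁, hEsymm ω₂, ← QuotientGroup.mk_mul, hEmk]
  have hShift : ∀ k : ℤ, shiftMem (sample f a 1) k
      = ⟨sample f a (a ^ k), hmem (a ^ k)⟩ := by
    intro k
    refine Subtype.ext ?_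
    show shiftk k (sample f a 1) = sample f a (a ^ k)
    rw [sample_shiftk, one_mul]
  refine ⟨hmem, m, ⟨?_, ?_⟩, ?_, ?_, hHom, ?_, N, rfl, E, ?_⟩
  · exact E.continuous.comp
      ((E.symm.continuous.comp continuous_fst).mul (E.symm.continuous.comp continuous_snd))
  · intro k l
    rw [hShift k, hShift l, hShift (k + l), hHom, ← zpow_add]
  · exact (sample_continuous f a).subtype_mk _
  · intro x
    obtain ⟨ω, hω⟩ := hull_subset_range f a hmin x.2
    exact ⟨ω, Subtype.ext hω⟩
  · have hid : hullId (sample f a 1) = ⟨sample f a 1, hmem 1⟩ := Subtype.ext rfl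
    rw [hid, hHom, ← hid]
    congr 1
    rw [one_mul]
  · intro x y
    show E (x * y) = E (E.symm (E x) * E.symm (E y))
    rw [Homeomorph.symm_apply_apply, Homeomorph.symm_apply_apply]
end
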